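/- Let γ : (0,∞) → ℝ be C², positive, nonincreasing, tending to 0 at infinity, satisfying l·|γ'(s)|² ≤ γ(s)·γ''(s) for all s > 0 with some l > 1. Then for every k > 1/(l−1), lim_{s→∞} s^k γ(s) = +∞. -/

import Mathlib

theorem A3_implies_A2 (γ γ' γ'' : ℝ → ℝ) (l : ℝ) (hl : 1 < l)
    (hderiv : ∀ s : ℝ, 0 < s → HasDerivAt γ (γ' s) s)
    (hderiv2 : ∀ s : ℝ, 0 < s → HasDerivAt γ' (γ'' s) s)
    (hcont : ContinuousOn γ'' (Set.Ioi 0))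
    (hpos : ∀ s : ℝ, 0 < s → 0 < γ s)
    (hmono : AntitoneOn γ (Set.Ioi 0))
    (hlim : Filter.Tendsto γ Filter.atTop (nhds 0))
    (hA3 : ∀ s : ℝ, 0 < s → l * (γ' s) ^ 2 ≤ γ s * γ'' s) :
    ∀ k : ℝ, 1 / (l - 1) < k →
      Filter.Tendsto (fun s : ℝ => s ^ k * γ s) Filter.atTop Filter.atTop := by
  intro k hk
  have hp_ne : (1 : ℝ) - l ≠ 0 := by intro h; nlinarith
  have hpneg : (1 : ℝ) - l < 0 := by linarith
  set p : ℝ := 1 - l with hp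
  set F : ℝ → ℝ := fun s => γ s ^ p with hF
  set F' : ℝ → ℝ := fun s => γ' s * p * γ s ^ (p - 1) with hF'
  set F'' : ℝ → ℝ := fun s => p * γ s ^ (p - 2) * (γ s * γ'' s - l * γ' s ^ 2) with hF''
  have hFd : ∀ s : ℝ, 0 < s → HasDerivAt F (F' s) s :=
    fun s hs => (hderiv s hs).rpow_const (Or.inl (hpos s hs).ne')
  have hF'd : ∀ s : ℝ, 0 < s → HasDerivAt F' (F'' s) s := by
    intro s hs
    have h1 : HasDerivAt (fun t => γ t ^ (p - 1)) (γ' s * (p - 1) * γ s ^ (p - 1 - 1)) s :=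
      (hderiv s hs).rpow_const (Or.inl (hpos s hs).ne')
    have h2 := ((hderiv2 s hs).mul_const p).mul h1
    refine h2.congr_deriv ?_
    have hsplit : γ s ^ (p - 1) = γ s ^ (p - 2) * γ s := by
      rw [← Real.rpow_add_one (hpos s hs).ne' (p - 2)]
      congr 1
      ring
    have hsplit2 : p - 1 - 1 = p - 2 := by ring
    rw [hsplit2, hsplit]
    have hl1 : p - 1 = -l := by rw [hp]; ring
    rw [hF'', hl1]
    ring
  have hF''np : ∀ s : ℝ, 0 < s → F'' s ≤ 0 := by
    intro s hs
    have h1 : p * γ s ^ (p - 2) ≤ 0 :=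
      mul_nonpos_of_nonpos_of_nonneg hpneg.le (Real.rpow_pos_of_pos (hpos s hs) _).le
    have h2 : 0 ≤ γ s * γ'' s - l * γ' s ^ 2 := by linarith [hA3 s hs]
    exact mul_nonpos_of_nonpos_of_nonneg h1 h2
  -- F' is antitone on (0, ∞)
  have hant : AntitoneOn F' (Set.Ioi 0) := by
    apply antitoneOn_of_hasDerivWithinAt_nonpos (convex_Ioi 0)
    · exact fun x hx => ((hF'd x hx).continuousAt).continuousWithinAt
    · rw [interior_Ioi]
      exact fun x hx => (hF'd x hx).hasDerivWithinAt
    · rw [interior_Ioi]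
      exact fun x hx => hF''np x hx
  set C : ℝ := |F 1| + |F' 1| + 1 with hC
  have hCpos : 0 < C := by positivity
  -- linear bound on F for s > 1
  have key : ∀ s : ℝ, 1 < s → F s ≤ C * s := by
    intro s hs
    obtain ⟨c, hc, hceq⟩ := exists_hasDerivAt_eq_slope F F' hs
      (fun x hx => ((hFd x (lt_of_lt_of_le zero_lt_one hx.1)).continuousAt).continuousWithinAt)
      (fun x hx => hFd x (lt_trans zero_lt_one hx.1))
    have hc1 : F' c ≤ F' 1 := hant (Set.mem_Ioi.2 zero_lt_one)
      (Set.mem_Ioi.2 (lt_trans zero_lt_one hc.1)) hc.1.le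
    have hs1 : 0 < s - 1 := by linarith
    have : F s - F 1 = F' c * (s - 1) := by
      field_simp at hceq
      linarith [hceq]
    have hFs : F s ≤ F 1 + F' 1 * (s - 1) := by
      nlinarith [this, hc1]
    have habs1 : F 1 ≤ |F 1| * s := by
      calc F 1 ≤ |F 1| := le_abs_self _
      _ ≤ |F 1| * s := le_mul_of_one_le_right (abs_nonneg _) hs.le
    have habs2 : F' 1 * (s - 1) ≤ |F' 1| * s := by
      calc F' 1 * (s - 1) ≤ |F' 1| * (s - 1) :=
        mul_le_mul_of_nonneg_right (le_abs_self _) hs1.le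
      _ ≤ |F' 1| * s := by nlinarith [abs_nonneg (F' 1)]
    have : (0:ℝ) < s := by linarith
    nlinarith
  -- invert the bound: γ s ≥ (C*s)^(1/p)
  have hinv : ∀ s : ℝ, 1 < s → (C * s) ^ (1 / p) ≤ γ s := by
    intro s hs
    have hs0 : (0:ℝ) < s := by linarith
    have hγ0 := hpos s hs0
    have hF0 : 0 < F s := Real.rpow_pos_of_pos hγ0 _
    have h1 : (C * s) ^ (1 / p) ≤ (F s) ^ (1 / p) :=
      Real.rpow_le_rpow_of_nonpos hF0 (key s hs)
        (by apply div_nonpos_of_nonneg_of_nonpos zero_le_one hpneg.le)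
    have h2 : (F s) ^ (1 / p) = γ s := by
      rw [hF]
      rw [← Real.rpow_mul hγ0.le p (1 / p), mul_one_div, div_self hp_ne, Real.rpow_one]
    linarith [h1, h2.le, h2.ge]
  -- exponent
  set q : ℝ := k + 1 / p with hq
  have hqpos : 0 < q := by
    have : 1 / p = -(1 / (l - 1)) := by
      have h' : (1:ℝ) - l = -(l - 1) := by ring
      rw [hp, h', one_div, one_div, inv_neg]
    rw [hq, this]
    linarith
  have hlow : Filter.Tendsto (fun s : ℝ => C ^ (1 / p) * s ^ q) Filter.atTop Filter.atTop :=
    (tendsto_rpow_atTop hqpos).const_mul_atTop (Real.rpow_pos_of_pos hCpos _)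
  apply Filter.tendsto_atTop_mono' _ _ hlow
  filter_upwards [Filter.eventually_gt_atTop 1] with s hs
  have hs0 : (0:ℝ) < s := by linarith
  have hmain : C ^ (1 / p) * s ^ q = s ^ k * ((C * s) ^ (1 / p)) := by
    rw [Real.mul_rpow hCpos.le hs0.le, hq, Real.rpow_add hs0]
    ring
  rw [hmain]
  exact mul_le_mul_of_nonneg_left (hinv s hs) (Real.rpow_nonneg hs0.le _)
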